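/- Let Ū ⊆ K̄ⁿ be a K̄-subspace of dimension d, let π : Kⁿ → K^d be an exhibition of Ū, and let U, U' ⊆ Kⁿ be two lifts of Ū. Then there is a unique K-linear map M₀ : U → U' satisfying π(M₀(u)) = π(u) for all u ∈ U; this M₀ is bijective and is a risometry, i.e. rv(M₀(u) − M₀(u')) = rv(u − u') for all u, u' ∈ U. Moreover, M₀ extends to a matrix M ∈ GLₙ(𝒪) with res(M) = Iₙ sending U onto U'. -/

import Mathlib

noncomputable section

open scoped Classical Pointwise

section Preamble

variable {K : Type*} [Field K] {Γ : Type*} [LinearOrderedCommGroupWithZero Γ]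

instance (priority := 100) : OrderBot Γ where
  bot := 0
  bot_le _ := zero_le'

/-- The max-valuation on `K^n`: `v(a) = maxᵢ v(aᵢ)`. -/
def vv (v : Valuation K Γ) {n : ℕ} (x : Fin n → K) : Γ :=
  Finset.univ.sup fun i => v (x i)

/-- `rvEq v x y` expresses `rv(x) = rv(y)` in `RV⁽ⁿ⁾ = Kⁿ/∼`, where
`x ∼ y` iff `v(x−y) < v(x)` or `x = y = 0`. -/
def rvEq (v : Valuation K Γ) {n : ℕ} (x y : Fin n → K) : Prop :=
  vv v (x - y) < vv v x ∨ (x = 0 ∧ y = 0)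

/-- Balls in `K` (with `K` itself counting as a ball). -/
def IsBall1 (v : Valuation K Γ) (B : Set K) : Prop :=
  B = Set.univ ∨ ∃ a : K, ∃ γ : Γ, γ ≠ 0 ∧
    (B = {x | v (x - a) < γ} ∨ B = {x | v (x - a) ≤ γ})

/-- Balls in `Kⁿ` (with `Kⁿ` itself counting as a ball). -/
def IsBall (v : Valuation K Γ) {n : ℕ} (B : Set (Fin n → K)) : Prop :=
  B = Set.univ ∨ ∃ a : Fin n → K, ∃ γ : Γ, γ ≠ 0 ∧
    (B = {x | vv v (x - a) < γ} ∨ B = {x | vv v (x - a) ≤ γ})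

/-- Spherical completeness: every nonempty chain of balls in `K` has nonempty
intersection. -/
def SphericallyComplete (v : Valuation K Γ) : Prop :=
  ∀ C : Set (Set K), C.Nonempty → (∀ B ∈ C, IsBall1 v B) → IsChain (· ⊆ ·) C →
    (⋂ B ∈ C, B).Nonempty

/-- The residue field `K̄` of the valuation ring `𝒪 = {x | v x ≤ 1}`. -/
def Kbar (v : Valuation K Γ) : Type _ :=
  IsLocalRing.ResidueField v.valuationSubring

instance (v : Valuation K Γ) : Field (Kbar v) :=
  inferInstanceAs (Field (IsLocalRing.ResidueField v.valuationSubring))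

/-- The residue map `res : 𝒪 → K̄`, extended by the junk value `0` outside `𝒪`. -/
def res' (v : Valuation K Γ) (x : K) : Kbar v :=
  if h : v x ≤ 1 then IsLocalRing.residue v.valuationSubring ⟨x, h⟩ else 0

/-- The coordinatewise residue map on `Kⁿ`. -/
def resv (v : Valuation K Γ) {n : ℕ} (x : Fin n → K) : Fin n → Kbar v :=
  fun i => res' v (x i)

/-- `res(S)` for a set `S ⊆ Kⁿ`: the set of residues of points of `S ∩ 𝒪ⁿ`. -/
def resSet (v : Valuation K Γ) {n : ℕ} (S : Set (Fin n → K)) : Set (Fin n → Kbar v) :=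
  resv v '' {x ∈ S | ∀ i, v (x i) ≤ 1}

/-- `dir(x) = res(K·x) ⊆ K̄ⁿ`. -/
def dirSet (v : Valuation K Γ) {n : ℕ} (x : Fin n → K) : Set (Fin n → Kbar v) :=
  resSet v {y | ∃ c : K, y = c • x}

/-- The coordinate projection `Kⁿ → K^d` selecting the coordinates `σ 0 < σ 1 < ⋯`. -/
def proj {A : Type*} {n d : ℕ} (σ : Fin d → Fin n) (x : Fin n → A) : Fin d → A :=
  fun k => x (σ k)

/-- `σ` (a strictly increasing selection of `d` of the `n` coordinates) is an
exhibition of the `K̄`-subspace `Ū ⊆ K̄ⁿ` if the corresponding coordinate projection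
`K̄ⁿ → K̄^d` restricts to an isomorphism from `Ū` onto `K̄^d`. -/
def IsExhibition (v : Valuation K Γ) {n d : ℕ} (σ : Fin d → Fin n)
    (Ubar : Submodule (Kbar v) (Fin n → Kbar v)) : Prop :=
  StrictMono σ ∧ Set.BijOn (proj σ) (Ubar : Set (Fin n → Kbar v)) Set.univ

/-- `affdir(C)`: the `K̄`-subspace of `K̄ⁿ` generated by all `dir(x − x')`, `x, x' ∈ C`. -/
def affdir (v : Valuation K Γ) {n : ℕ} (C : Set (Fin n → K)) :
    Submodule (Kbar v) (Fin n → Kbar v) :=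
  Submodule.span (Kbar v) (⋃ x ∈ C, ⋃ x' ∈ C, dirSet v (x - x'))

/-- A matrix has entries in the valuation ring `𝒪`. -/
def EntriesInO (v : Valuation K Γ) {n : ℕ} (M : Matrix (Fin n) (Fin n) K) : Prop :=
  ∀ i j, v (M i j) ≤ 1

/-- `M ∈ GLₙ(𝒪)`: `M` is invertible, with entries in `𝒪`, and its inverse also has
entries in `𝒪`. -/
def MemGLO (v : Valuation K Γ) {n : ℕ} (M : Matrix (Fin n) (Fin n) K) : Prop :=
  EntriesInO v M ∧ ∃ N : Matrix (Fin n) (Fin n) K,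
    M * N = 1 ∧ N * M = 1 ∧ EntriesInO v N

/-- The entrywise residue matrix of `M`. -/
def resM (v : Valuation K Γ) {n : ℕ} (M : Matrix (Fin n) (Fin n) K) :
    Matrix (Fin n) (Fin n) (Kbar v) :=
  fun i j => res' v (M i j)

/-- `DeltaLE v U W γ` expresses `Δ(U, W) ≤ γ`: for every `u ∈ U` there is `w ∈ W`
with `v(u − w) ≤ v(u)·γ`. -/
def DeltaLE (v : Valuation K Γ) {n : ℕ} (U W : Submodule K (Fin n → K)) (γ : Γ) : Prop :=
  ∀ u ∈ U, ∃ w ∈ W, vv v (u - w) ≤ vv v u * γ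

/-- `IsDelta v U W γ` expresses `Δ(U, W) = γ`: `γ` is the minimum of all admissible
bounds. -/
def IsDelta (v : Valuation K Γ) {n : ℕ} (U W : Submodule K (Fin n → K)) (γ : Γ) : Prop :=
  DeltaLE v U W γ ∧ ∀ δ : Γ, DeltaLE v U W δ → γ ≤ δ

end Preamble
section MyAux

variable {K : Type*} [Field K] {Γ : Type*} [LinearOrderedCommGroupWithZero Γ]
variable (v : Valuation K Γ)

lemma my_bot_eq : (⊥ : Γ) = 0 := le_antisymm bot_le zero_le'

lemma my_le_zero_iff {a : Γ} : a ≤ 0 ↔ a = 0 :=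
  ⟨fun h => le_antisymm h zero_le', fun h => h.le⟩

lemma vv_le_iff {n : ℕ} (x : Fin n → K) (γ : Γ) : vv v x ≤ γ ↔ ∀ i, v (x i) ≤ γ := by
  simp [vv, Finset.sup_le_iff]

lemma coord_le_vv {n : ℕ} (x : Fin n → K) (i : Fin n) : v (x i) ≤ vv v x :=
  Finset.le_sup (f := fun i => v (x i)) (Finset.mem_univ i)

lemma vv_eq_zero_iff {n : ℕ} (x : Fin n → K) : vv v x = 0 ↔ x = 0 := by
  constructor
  · intro h
    funext i
    exact v.zero_iff.mp (le_antisymm (h ▸ coord_le_vv v x i) zero_le')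
  · rintro rfl
    refine le_antisymm ?_ zero_le'
    rw [vv_le_iff]
    intro i
    simp

lemma vv_lt_iff {n : ℕ} (x : Fin n → K) {γ : Γ} (hγ : γ ≠ 0) :
    vv v x < γ ↔ ∀ i, v (x i) < γ := by
  rw [vv, Finset.sup_lt_iff]
  · simp
  · rw [my_bot_eq]; exact zero_lt_iff.mpr hγ

lemma exists_coord_eq_vv {n : ℕ} {x : Fin n → K} (hx : x ≠ 0) :
    ∃ i, v (x i) = vv v x ∧ x i ≠ 0 := by
  have hne : (Finset.univ : Finset (Fin n)).Nonempty := by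
    rcases Function.ne_iff.mp hx with ⟨i, -⟩
    exact ⟨i, Finset.mem_univ i⟩
  obtain ⟨i, -, hi⟩ := Finset.exists_mem_eq_sup Finset.univ hne fun i => v (x i)
  refine ⟨i, hi.symm, ?_⟩
  intro h0
  apply hx
  rw [← vv_eq_zero_iff v]
  exact hi.trans (by rw [h0, map_zero])

lemma vv_smul {n : ℕ} (c : K) (x : Fin n → K) : vv v (c • x) = v c * vv v x := by
  rcases eq_or_ne x 0 with rfl | hx
  · simp [vv_eq_zero_iff, (vv_eq_zero_iff v (0 : Fin n → K)).mpr rfl]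
  · refine le_antisymm ?_ ?_
    · rw [vv_le_iff]
      intro i
      simpa [map_mul] using mul_le_mul_right (coord_le_vv v x i) (v c)
    · obtain ⟨i, hi, -⟩ := exists_coord_eq_vv v hx
      calc v c * vv v x = v (c * x i) := by rw [map_mul, hi]
      _ ≤ vv v (c • x) := by simpa using coord_le_vv v (c • x) i

lemma vv_sub_le {n : ℕ} (x y : Fin n → K) :
    vv v (x - y) ≤ max (vv v x) (vv v y) := by
  rw [vv_le_iff]
  intro i
  refine le_trans (v.map_sub _ _) (max_le_max (coord_le_vv v x i) (coord_le_vv v y i))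

end MyAux
section MyAux2

variable {K : Type*} [Field K] {Γ : Type*} [LinearOrderedCommGroupWithZero Γ]
variable (v : Valuation K Γ)

lemma integers_valuationSubring : v.Integers v.valuationSubring :=
  { hom_inj := Subtype.coe_injective
    map_le_one := fun r => r.2
    exists_of_le_one := fun r hr => ⟨⟨r, hr⟩, rfl⟩ }

lemma res'_def {x : K} (hx : v x ≤ 1) :
    res' v x = IsLocalRing.residue v.valuationSubring ⟨x, hx⟩ := dif_pos hx

lemma res'_zero : res' v 0 = 0 := by
  rw [res'_def v (by simp)]
  exact map_zero _

lemma res'_one : res' v 1 = 1 := by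
  rw [res'_def v (by simp)]
  exact map_one _

lemma res'_add {x y : K} (hx : v x ≤ 1) (hy : v y ≤ 1) :
    res' v (x + y) = res' v x + res' v y := by
  rw [res'_def v hx, res'_def v hy,
    res'_def v (le_trans (v.map_add x y) (max_le hx hy))]
  rw [show (⟨x + y, le_trans (v.map_add x y) (max_le hx hy)⟩ : v.valuationSubring)
    = ⟨x, hx⟩ + ⟨y, hy⟩ from rfl]
  exact map_add _ _ _

lemma res'_mul {x y : K} (hx : v x ≤ 1) (hy : v y ≤ 1) :
    res' v (x * y) = res' v x * res' v y := by
  have hxy : v (x * y) ≤ 1 := by rw [map_mul]; exact mul_le_one' hx hy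
  rw [res'_def v hx, res'_def v hy, res'_def v hxy]
  rw [show (⟨x * y, hxy⟩ : v.valuationSubring) = ⟨x, hx⟩ * ⟨y, hy⟩ from rfl]
  exact map_mul _ _ _

lemma res'_neg {x : K} (hx : v x ≤ 1) : res' v (-x) = - res' v x := by
  have hx' : v (-x) ≤ 1 := by rwa [v.map_neg]
  rw [res'_def v hx, res'_def v hx']
  rw [show (⟨-x, hx'⟩ : v.valuationSubring) = -⟨x, hx⟩ from rfl]
  exact map_neg _ _

lemma res'_sum {ι : Type*} (s : Finset ι) (f : ι → K) (hf : ∀ i ∈ s, v (f i) ≤ 1) :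
    res' v (∑ i ∈ s, f i) = ∑ i ∈ s, res' v (f i) := by
  classical
  induction s using Finset.induction_on with
  | empty => simpa using res'_zero v
  | insert _ _ hni ih =>
    rename_i a s
    rw [Finset.sum_insert hni, Finset.sum_insert hni,
      res'_add v (hf a (Finset.mem_insert_self a s))
        (v.map_sum_le fun i hi => hf i (Finset.mem_insert_of_mem hi)),
      ih fun i hi => hf i (Finset.mem_insert_of_mem hi)]

lemma res'_eq_zero_iff {x : K} (hx : v x ≤ 1) : res' v x = 0 ↔ v x < 1 := by
  rw [res'_def v hx]
  rw [show IsLocalRing.residue v.valuationSubring ⟨x, hx⟩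
    = Ideal.Quotient.mk (IsLocalRing.maximalIdeal v.valuationSubring)
      ⟨x, (v.mem_valuationSubring_iff x).mpr hx⟩ from rfl]
  change (Ideal.Quotient.mk (IsLocalRing.maximalIdeal v.valuationSubring)
      ⟨x, (v.mem_valuationSubring_iff x).mpr hx⟩ :
      v.valuationSubring ⧸ IsLocalRing.maximalIdeal v.valuationSubring) = 0 ↔ v x < 1
  rw [Ideal.Quotient.eq_zero_iff_mem, IsLocalRing.mem_maximalIdeal, mem_nonunits_iff,
    (integers_valuationSubring v).isUnit_iff_valuation_eq_one]
  constructor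
  · intro h
    exact lt_of_le_of_ne hx h
  · intro h h'
    exact absurd h' (ne_of_lt h)

lemma res'_eq_zero_of_lt {x : K} (hx : v x < 1) : res' v x = 0 :=
  (res'_eq_zero_iff v hx.le).mpr hx

lemma res'_eq_res'_iff {x y : K} (hx : v x ≤ 1) (hy : v y ≤ 1) :
    res' v x = res' v y ↔ v (x - y) < 1 := by
  have h1 : v (x - y) ≤ 1 := le_trans (v.map_sub _ _) (max_le hx hy)
  rw [← res'_eq_zero_iff v h1, sub_eq_add_neg, res'_add v hx (by rwa [v.map_neg]),
    res'_neg v hy, add_neg_eq_zero]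

end MyAux2
section MyAux3

variable {K : Type*} [Field K] {Γ : Type*} [LinearOrderedCommGroupWithZero Γ]

lemma my_mul_lt_mul_left {a b c : Γ} (h : b < c) (ha : a ≠ 0) : a * b < a * c :=
  lt_of_le_of_ne (mul_le_mul_right h.le a)
    (fun heq => absurd (mul_left_cancel₀ ha heq) h.ne)

lemma my_lt_of_mul_lt_mul_left {a b c : Γ} (h : a * b < a * c) : b < c :=
  lt_of_not_ge fun hle => absurd (mul_le_mul_right hle a) (not_le.mpr h)

variable (v : Valuation K Γ)

lemma vv_neg {m : ℕ} (x : Fin m → K) : vv v (-x) = vv v x := by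
  unfold vv
  congr 1
  funext i
  show v ((-x) i) = v (x i)
  rw [Pi.neg_apply, v.map_neg]

lemma vv_proj_le {m e : ℕ} (τ : Fin e → Fin m) (x : Fin m → K) :
    vv v (proj τ x) ≤ vv v x := by
  rw [vv_le_iff]
  exact fun k => coord_le_vv v x (τ k)

lemma vv_single {m : ℕ} (k : Fin m) : vv v (Pi.single k (1 : K)) = 1 := by
  refine le_antisymm ?_ ?_
  · rw [vv_le_iff]
    intro i
    rcases eq_or_ne i k with rfl | h
    · simp
    · simp [Pi.single_apply, h]
  · have := coord_le_vv v (Pi.single k (1 : K)) k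
    simpa using this

end MyAux3

section MyLift

variable {K : Type*} [Field K] {Γ : Type*} [LinearOrderedCommGroupWithZero Γ]
variable (v : Valuation K Γ) {n d : ℕ} {σ : Fin d → Fin n}
variable {Ubar : Submodule (Kbar v) (Fin n → Kbar v)}

lemma resv_mem_Ubar {U : Submodule K (Fin n → K)}
    (hU : resSet v (U : Set (Fin n → K)) = (Ubar : Set (Fin n → Kbar v)))
    {x : Fin n → K} (hx : x ∈ U) (hxO : ∀ i, v (x i) ≤ 1) :
    resv v x ∈ (Ubar : Set (Fin n → Kbar v)) := by
  rw [← hU]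
  exact ⟨x, ⟨hx, hxO⟩, rfl⟩

lemma vv_proj_eq (hσ : IsExhibition v σ Ubar) {U : Submodule K (Fin n → K)}
    (hU : resSet v (U : Set (Fin n → K)) = (Ubar : Set (Fin n → Kbar v)))
    {x : Fin n → K} (hx : x ∈ U) :
    vv v (proj σ x) = vv v x := by
  refine le_antisymm (vv_proj_le v σ x) ?_
  by_contra hlt'
  have hlt : vv v (proj σ x) < vv v x := lt_of_not_ge hlt'
  have hx0 : x ≠ 0 := by
    rintro rfl
    rw [(vv_eq_zero_iff v _).mpr rfl] at hlt
    exact absurd hlt (by simp [my_le_zero_iff, ← my_bot_eq])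
  have hvx : vv v x ≠ 0 := fun h => hx0 ((vv_eq_zero_iff v x).mp h)
  obtain ⟨j, hj, hj0⟩ := exists_coord_eq_vv v hx0
  set c : K := (x j)⁻¹ with hc
  have hvc : v c * vv v x = 1 := by
    rw [hc, map_inv₀, hj, inv_mul_cancel₀ hvx]
  have hO : ∀ i, v ((c • x) i) ≤ 1 := by
    intro i
    rw [Pi.smul_apply, smul_eq_mul, map_mul]
    calc v c * v (x i) ≤ v c * vv v x := mul_le_mul_right (coord_le_vv v x i) _
    _ = 1 := hvc
  have ha : resv v (c • x) ∈ (Ubar : Set (Fin n → Kbar v)) :=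
    resv_mem_Ubar v hU (U.smul_mem c hx) hO
  have haj : resv v (c • x) j = 1 := by
    have h1 : (c • x) j = 1 := by rw [Pi.smul_apply, smul_eq_mul, hc, inv_mul_cancel₀ hj0]
    show res' v ((c • x) j) = 1
    rw [h1, res'_one]
  have hproj : proj σ (resv v (c • x)) = proj σ (0 : Fin n → Kbar v) := by
    funext k
    show res' v ((c • x) (σ k)) = (0 : Fin n → Kbar v) (σ k)
    rw [Pi.zero_apply]
    apply res'_eq_zero_of_lt
    rw [Pi.smul_apply, smul_eq_mul, map_mul]
    calc v c * v (x (σ k)) ≤ v c * vv v (proj σ x) :=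
          mul_le_mul_right (coord_le_vv v (proj σ x) k) _
    _ < v c * vv v x := my_mul_lt_mul_left hlt (by rw [hc, map_inv₀]; exact inv_ne_zero (hj ▸ hvx))
    _ = 1 := hvc
  have hzero : resv v (c • x) = 0 := hσ.2.2.1 ha (Ubar.zero_mem) hproj
  rw [hzero] at haj
  exact absurd haj.symm one_ne_zero

lemma proj_eq_on (hσ : IsExhibition v σ Ubar) {U : Submodule K (Fin n → K)}
    (hU : resSet v (U : Set (Fin n → K)) = (Ubar : Set (Fin n → Kbar v)))
    {x y : Fin n → K} (hx : x ∈ U) (hy : y ∈ U) (h : proj σ x = proj σ y) :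
    x = y := by
  have hxy : x - y ∈ U := U.sub_mem hx hy
  have hp0 : proj σ (x - y) = 0 := by
    funext k
    show x (σ k) - y (σ k) = 0
    rw [show x (σ k) = y (σ k) from congrFun h k, sub_self]
  have h0 : vv v (x - y) = 0 := by
    rw [← vv_proj_eq v hσ hU hxy, hp0, (vv_eq_zero_iff v _).mpr rfl]
  exact sub_eq_zero.mp ((vv_eq_zero_iff v _).mp h0)

lemma close_of_proj_eq (hσ : IsExhibition v σ Ubar) {U U' : Submodule K (Fin n → K)}
    (hU : resSet v (U : Set (Fin n → K)) = (Ubar : Set (Fin n → Kbar v)))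
    (hU' : resSet v (U' : Set (Fin n → K)) = (Ubar : Set (Fin n → Kbar v)))
    {x y : Fin n → K} (hx : x ∈ U) (hy : y ∈ U')
    (h : proj σ x = proj σ y) (hx0 : x ≠ 0) :
    vv v (x - y) < vv v x := by
  have hvx : vv v x ≠ 0 := fun h0 => hx0 ((vv_eq_zero_iff v x).mp h0)
  have hvyx : vv v y = vv v x := by
    rw [← vv_proj_eq v hσ hU' hy, ← h, vv_proj_eq v hσ hU hx]
  obtain ⟨j, hj, hj0⟩ := exists_coord_eq_vv v hx0
  set c : K := (x j)⁻¹ with hc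
  have hvc : v c * vv v x = 1 := by
    rw [hc, map_inv₀, hj, inv_mul_cancel₀ hvx]
  have hOx : ∀ i, v ((c • x) i) ≤ 1 := by
    intro i
    rw [Pi.smul_apply, smul_eq_mul, map_mul]
    calc v c * v (x i) ≤ v c * vv v x := mul_le_mul_right (coord_le_vv v x i) _
    _ = 1 := hvc
  have hOy : ∀ i, v ((c • y) i) ≤ 1 := by
    intro i
    rw [Pi.smul_apply, smul_eq_mul, map_mul]
    calc v c * v (y i) ≤ v c * vv v x := by
          rw [← hvyx]; exact mul_le_mul_right (coord_le_vv v y i) _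
    _ = 1 := hvc
  have ha : resv v (c • x) ∈ (Ubar : Set (Fin n → Kbar v)) :=
    resv_mem_Ubar v hU (U.smul_mem c hx) hOx
  have hb : resv v (c • y) ∈ (Ubar : Set (Fin n → Kbar v)) :=
    resv_mem_Ubar v hU' (U'.smul_mem c hy) hOy
  have hpr : proj σ (resv v (c • x)) = proj σ (resv v (c • y)) := by
    funext k
    show res' v ((c • x) (σ k)) = res' v ((c • y) (σ k))
    rw [show (c • x) (σ k) = (c • y) (σ k) by
      rw [Pi.smul_apply, Pi.smul_apply, show x (σ k) = y (σ k) from congrFun h k]]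
  have hab : resv v (c • x) = resv v (c • y) := hσ.2.2.1 ha hb hpr
  rw [vv_lt_iff v _ hvx]
  intro i
  have h1 : res' v ((c • x) i) = res' v ((c • y) i) := congrFun hab i
  have h2 : v ((c • x) i - (c • y) i) < 1 := (res'_eq_res'_iff v (hOx i) (hOy i)).mp h1
  have h3 : v c * v (x i - y i) < v c * vv v x := by
    rw [hvc, ← map_mul]
    convert h2 using 2
    rw [Pi.smul_apply, Pi.smul_apply, smul_eq_mul, smul_eq_mul, mul_sub]
  exact my_lt_of_mul_lt_mul_left h3

end MyLift
section MyLift2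

variable {K : Type*} [Field K] {Γ : Type*} [LinearOrderedCommGroupWithZero Γ]
variable (v : Valuation K Γ) {n d : ℕ} {σ : Fin d → Fin n}
variable {Ubar : Submodule (Kbar v) (Fin n → Kbar v)}

lemma proj_sum_smul {m : Fin d → Fin n → K} (c : Fin d → K) :
    proj σ (∑ k, c k • m k) = ∑ k, c k • proj σ (m k) := by
  funext l
  rw [Finset.sum_apply]
  show (∑ k, c k • m k) (σ l) = _
  rw [Finset.sum_apply]
  rfl

lemma proj_sum_basis {m : Fin d → Fin n → K}
    (hm : ∀ k, proj σ (m k) = Pi.single k 1) (c : Fin d → K) :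
    proj σ (∑ k, c k • m k) = c := by
  classical
  rw [proj_sum_smul]
  funext l
  rw [Finset.sum_apply]
  have : ∀ k, (c k • proj σ (m k)) l = if l = k then c k else 0 := by
    intro k
    rw [hm k, Pi.smul_apply, smul_eq_mul, Pi.single_apply]
    split <;> simp
  simp only [this]
  simp

lemma exists_proj_eq (hσ : IsExhibition v σ Ubar) {U : Submodule K (Fin n → K)}
    (hU : resSet v (U : Set (Fin n → K)) = (Ubar : Set (Fin n → Kbar v)))
    (t : Fin d → K) : ∃ x ∈ U, proj σ x = t := by
  classical
  have hsurj : ∀ k : Fin d, ∃ u : Fin n → K, u ∈ U ∧ (∀ i, v (u i) ≤ 1) ∧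
      proj σ (resv v u) = Pi.single k 1 := by
    intro k
    obtain ⟨abar, habar, hpro⟩ := hσ.2.2.2 (Set.mem_univ (Pi.single k (1 : Kbar v)))
    rw [← hU] at habar
    obtain ⟨u, ⟨huU, huO⟩, hres⟩ := habar
    exact ⟨u, huU, huO, by rw [hres]; exact hpro⟩
  choose u huU huO hures using hsurj
  have hresc : ∀ k l, res' v (u k (σ l)) = (Pi.single k 1 : Fin d → Kbar v) l :=
    fun k l => congrFun (hures k) l
  have hli : LinearIndependent K (fun k => proj σ (u k)) := by
    rw [Fintype.linearIndependent_iff]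
    intro g hg k
    by_contra hk
    have hgne : g ≠ 0 := fun h0 => hk (congrFun h0 k)
    have hsum : (∑ k, g k • u k) = 0 := by
      apply proj_eq_on v hσ hU
        (Submodule.sum_mem _ fun k _ => U.smul_mem _ (huU k)) U.zero_mem
      rw [proj_sum_smul, hg]
      funext l
      rfl
    obtain ⟨j, hj, hj0⟩ := exists_coord_eq_vv v hgne
    have hvg : vv v g ≠ 0 := fun h0 => hgne ((vv_eq_zero_iff v g).mp h0)
    set c : K := (g j)⁻¹ with hc
    have hO : ∀ k, v (c * g k) ≤ 1 := by
      intro k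
      rw [map_mul, hc, map_inv₀, hj]
      calc (vv v g)⁻¹ * v (g k) ≤ (vv v g)⁻¹ * vv v g :=
            mul_le_mul_right (coord_le_vv v g k) _
      _ = 1 := inv_mul_cancel₀ hvg
    have hzero : ∀ i, (∑ k, (c * g k) * u k i) = 0 := by
      intro i
      have h1 : (∑ k, (c * g k) * u k i) = c * ((∑ k, g k • u k) i) := by
        rw [Finset.sum_apply, Finset.mul_sum]
        congr 1
        funext k
        rw [Pi.smul_apply, smul_eq_mul, mul_assoc]
      rw [h1, hsum, Pi.zero_apply, mul_zero]
    have hres0 : ∀ l, res' v (c * g l) = 0 := by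
      intro l
      have h1 : res' v (∑ k, (c * g k) * u k (σ l)) = 0 := by
        rw [hzero (σ l), res'_zero]
      rw [res'_sum v _ _ (fun k _ => by
        rw [map_mul]
        exact mul_le_one' (hO k) (huO k (σ l)))] at h1
      have h2 : ∀ k, res' v ((c * g k) * u k (σ l)) =
          res' v (c * g k) * ((Pi.single k 1 : Fin d → Kbar v) l) := by
        intro k
        rw [res'_mul v (hO k) (huO k (σ l)), hresc k l]
      rw [Finset.sum_congr rfl (fun k _ => h2 k)] at h1
      have h3 : (∑ k, res' v (c * g k) * ((Pi.single k 1 : Fin d → Kbar v) l))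
          = res' v (c * g l) := by
        have : ∀ k, res' v (c * g k) * ((Pi.single k 1 : Fin d → Kbar v) l)
            = if l = k then res' v (c * g k) else 0 := by
          intro k
          rw [Pi.single_apply]
          split <;> simp
        simp only [this]
        simp
      rw [h3] at h1
      exact h1
    have hcontra := hres0 j
    rw [show c * g j = 1 from inv_mul_cancel₀ hj0, res'_one] at hcontra
    exact one_ne_zero hcontra
  have hspan : Submodule.span K (Set.range fun k => proj σ (u k)) = ⊤ :=
    hli.span_eq_top_of_card_eq_finrank' (by simp [Module.finrank_fin_fun])
  have ht : t ∈ Submodule.span K (Set.range fun k => proj σ (u k)) := by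
    rw [hspan]; trivial
  obtain ⟨c, hc⟩ := (Submodule.mem_span_range_iff_exists_fun K).mp ht
  refine ⟨∑ k, c k • u k, Submodule.sum_mem _ fun k _ => U.smul_mem _ (huU k), ?_⟩
  rw [proj_sum_smul]
  exact hc

end MyLift2
variable {K : Type*} [Field K] {Γ : Type*} [LinearOrderedCommGroupWithZero Γ]

/-- given an exhibition `π` of `Ū` and two lifts `U, U'` of `Ū`,
there is a unique `K`-linear `M₀ : U → U'` with `π ∘ M₀ = π`; it is bijective,
a risometry, and extends to some `M ∈ GLₙ(𝒪)` with `res M = Iₙ` sending `U` onto `U'`. -/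
theorem unique_projection_compatible_map_between_lifts
    (v : Valuation K Γ) {n d : ℕ}
    (Ubar : Submodule (Kbar v) (Fin n → Kbar v))
    (hdim : Module.finrank (Kbar v) Ubar = d)
    (σ : Fin d → Fin n) (hσ : IsExhibition v σ Ubar)
    (U U' : Submodule K (Fin n → K))
    (hU : resSet v (U : Set (Fin n → K)) = (Ubar : Set (Fin n → Kbar v)))
    (hU' : resSet v (U' : Set (Fin n → K)) = (Ubar : Set (Fin n → Kbar v))) :
    (∃! M₀ : U →ₗ[K] U',
      ∀ u : U, proj σ ((M₀ u : Fin n → K)) = proj σ (u : Fin n → K)) ∧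
    ∀ M₀ : U →ₗ[K] U',
      (∀ u : U, proj σ ((M₀ u : Fin n → K)) = proj σ (u : Fin n → K)) →
      (Function.Bijective M₀ ∧
       (∀ u u' : U, rvEq v ((M₀ u : Fin n → K) - (M₀ u' : Fin n → K))
          ((u : Fin n → K) - (u' : Fin n → K))) ∧
       ∃ M : Matrix (Fin n) (Fin n) K, MemGLO v M ∧ resM v M = 1 ∧
         U.map M.mulVecLin = U' ∧
         ∀ u : U, M.mulVec (u : Fin n → K) = (M₀ u : Fin n → K)) := by
  classical
  -- choose basis vectors projecting to the standard basis
  choose ub hubU hubp using fun k : Fin d => exists_proj_eq v hσ hU (Pi.single k 1)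
  choose ub' hub'U hub'p using fun k : Fin d => exists_proj_eq v hσ hU' (Pi.single k 1)
  -- decompositions
  have hdec : ∀ x ∈ U, x = ∑ k, x (σ k) • ub k := by
    intro x hx
    refine proj_eq_on v hσ hU hx
      (Submodule.sum_mem _ fun k _ => U.smul_mem _ (hubU k)) ?_
    rw [proj_sum_basis hubp]
    rfl
  have hdec' : ∀ x ∈ U', x = ∑ k, x (σ k) • ub' k := by
    intro x hx
    refine proj_eq_on v hσ hU' hx
      (Submodule.sum_mem _ fun k _ => U'.smul_mem _ (hub'U k)) ?_
    rw [proj_sum_basis hub'p]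
    rfl
  -- the canonical linear map F : U → U'
  have hmemF : ∀ x : U, (∑ k, (x : Fin n → K) (σ k) • ub' k) ∈ U' :=
    fun x => Submodule.sum_mem _ fun k _ => U'.smul_mem _ (hub'U k)
  set F : U →ₗ[K] U' :=
    { toFun := fun x => ⟨∑ k, (x : Fin n → K) (σ k) • ub' k, hmemF x⟩
      map_add' := by
        intro a b
        apply Subtype.ext
        show (∑ k, ((a : Fin n → K) + (b : Fin n → K)) (σ k) • ub' k) = _
        simp [add_smul, Finset.sum_add_distrib]
      map_smul' := by
        intro c a
        apply Subtype.ext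
        show (∑ k, (c • (a : Fin n → K)) (σ k) • ub' k) = _
        simp [mul_smul, Finset.smul_sum] } with hF
  have hFp : ∀ u : U, proj σ ((F u : Fin n → K)) = proj σ (u : Fin n → K) := by
    intro u
    show proj σ (∑ k, (u : Fin n → K) (σ k) • ub' k) = _
    rw [proj_sum_basis hub'p]
    rfl
  have hptwise : ∀ (A : U →ₗ[K] U'),
      (∀ u : U, proj σ ((A u : Fin n → K)) = proj σ (u : Fin n → K)) →
      ∀ u : U, (A u : Fin n → K) = (F u : Fin n → K) := by
    intro A hA u
    exact proj_eq_on v hσ hU' (A u).2 (F u).2 (by rw [hA u, ← hFp u])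
  constructor
  · exact ⟨F, hFp, fun A hA => LinearMap.ext fun u => Subtype.ext (hptwise A hA u)⟩
  intro M₀ hM₀
  -- Bijectivity
  have hinj : Function.Injective M₀ := by
    intro a b hab
    apply Subtype.ext
    refine proj_eq_on v hσ hU a.2 b.2 ?_
    rw [← hM₀ a, ← hM₀ b, hab]
  have hsurj : Function.Surjective M₀ := by
    intro y
    have hxU : (∑ k, (y : Fin n → K) (σ k) • ub k) ∈ U :=
      Submodule.sum_mem _ fun k _ => U.smul_mem _ (hubU k)
    refine ⟨⟨_, hxU⟩, Subtype.ext ?_⟩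
    refine proj_eq_on v hσ hU' (M₀ ⟨_, hxU⟩).2 y.2 ?_
    rw [hM₀]
    show proj σ (∑ k, (y : Fin n → K) (σ k) • ub k) = _
    rw [proj_sum_basis hubp]
    rfl
  -- Risometry
  have hriso : ∀ u u' : U, rvEq v ((M₀ u : Fin n → K) - (M₀ u' : Fin n → K))
      ((u : Fin n → K) - (u' : Fin n → K)) := by
    intro a b
    rcases eq_or_ne a b with rfl | hab
    · exact Or.inr ⟨sub_self _, sub_self _⟩
    · left
      have hXA : (M₀ a : Fin n → K) - (M₀ b : Fin n → K) = (M₀ (a - b) : Fin n → K) := by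
        rw [map_sub]; rfl
      have hBA : (a : Fin n → K) - (b : Fin n → K) = ((a - b : U) : Fin n → K) := rfl
      rw [hXA, hBA]
      set w : U := a - b with hwdef
      have hw0 : (w : Fin n → K) ≠ 0 := by
        intro h0
        exact hab (sub_eq_zero.mp (Subtype.ext h0 : w = 0))
      have hcl : vv v ((w : Fin n → K) - (M₀ w : Fin n → K)) < vv v (w : Fin n → K) :=
        close_of_proj_eq v hσ hU hU' w.2 (M₀ w).2 (hM₀ w).symm hw0
      have hvv : vv v ((M₀ w : Fin n → K)) = vv v (w : Fin n → K) := by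
        rw [← vv_proj_eq v hσ hU' (M₀ w).2, hM₀ w, vv_proj_eq v hσ hU w.2]
      rw [show (M₀ w : Fin n → K) - (w : Fin n → K)
          = -((w : Fin n → K) - (M₀ w : Fin n → K)) by rw [neg_sub], vv_neg, hvv]
      exact hcl
  refine ⟨⟨hinj, hsurj⟩, hriso, ?_⟩
  -- Matrix construction
  have hwlt : ∀ k i, v ((ub' k - ub k) i) < 1 := by
    intro k i
    have hne : ub k ≠ 0 := by
      intro h0
      have h1 := congrFun (h0 ▸ hubp k) k
      simp [proj, Pi.single_apply] at h1
    have hvvu : vv v (ub k) = 1 := by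
      rw [← vv_proj_eq v hσ hU (hubU k), hubp k, vv_single]
    have hcl := close_of_proj_eq v hσ hU hU' (hubU k) (hub'U k)
      (by rw [hubp k, hub'p k]) hne
    rw [hvvu] at hcl
    calc v ((ub' k - ub k) i) ≤ vv v (ub' k - ub k) := coord_le_vv v _ i
    _ = vv v (ub k - ub' k) := by rw [show ub k - ub' k = -(ub' k - ub k) by rw [neg_sub], vv_neg]
    _ < 1 := hcl
  set wv : Fin d → Fin n → K := fun k => ub' k - ub k with hwv
  set f : (Fin n → K) →ₗ[K] (Fin n → K) :=
    LinearMap.id + ∑ k, (LinearMap.proj (σ k)).smulRight (wv k) with hf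
  set g : (Fin n → K) →ₗ[K] (Fin n → K) :=
    LinearMap.id + ∑ k, (LinearMap.proj (σ k)).smulRight (-(wv k)) with hg
  have hfapp : ∀ x, f x = x + ∑ k, x (σ k) • wv k := by
    intro x
    simp [hf, LinearMap.sum_apply]
  have hgapp : ∀ x, g x = x + ∑ k, x (σ k) • (-(wv k)) := by
    intro x
    simp [hg, LinearMap.sum_apply]
  have hproj_w : ∀ k l, wv k (σ l) = 0 := by
    intro k l
    have h1 : ub' k (σ l) = ub k (σ l) :=
      (congrFun (hub'p k) l).trans (congrFun (hubp k) l).symm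
    show ub' k (σ l) - ub k (σ l) = 0
    rw [h1, sub_self]
  have hfproj : ∀ x l, f x (σ l) = x (σ l) := by
    intro x l
    rw [hfapp, Pi.add_apply, Finset.sum_apply]
    have : ∀ k, (x (σ k) • wv k) (σ l) = 0 := by
      intro k
      rw [Pi.smul_apply, hproj_w k l, smul_zero]
    simp [this]
  have hgproj : ∀ x l, g x (σ l) = x (σ l) := by
    intro x l
    rw [hgapp, Pi.add_apply, Finset.sum_apply]
    have : ∀ k, (x (σ k) • -(wv k)) (σ l) = 0 := by
      intro k
      rw [Pi.smul_apply, Pi.neg_apply, hproj_w k l, neg_zero, smul_zero]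
    simp [this]
  have hgf : ∀ x, g (f x) = x := by
    intro x
    rw [hgapp]
    have hcoord : ∀ k, f x (σ k) = x (σ k) := fun k => hfproj x k
    simp only [hcoord]
    rw [hfapp, add_assoc, ← Finset.sum_add_distrib]
    simp [smul_neg]
  have hfg : ∀ x, f (g x) = x := by
    intro x
    rw [hfapp]
    have hcoord : ∀ k, g x (σ k) = x (σ k) := fun k => hgproj x k
    simp only [hcoord]
    rw [hgapp, add_assoc, ← Finset.sum_add_distrib]
    simp [smul_neg]
  set M : Matrix (Fin n) (Fin n) K := LinearMap.toMatrix' f with hM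
  set N : Matrix (Fin n) (Fin n) K := LinearMap.toMatrix' g with hN
  have hMN : M * N = 1 := by
    rw [hM, hN, ← LinearMap.toMatrix'_comp,
      show f ∘ₗ g = LinearMap.id from LinearMap.ext hfg, LinearMap.toMatrix'_id]
  have hNM : N * M = 1 := by
    rw [hM, hN, ← LinearMap.toMatrix'_comp,
      show g ∘ₗ f = LinearMap.id from LinearMap.ext hgf, LinearMap.toMatrix'_id]
  have hmulVec : ∀ x, M.mulVec x = f x := by
    intro x
    rw [hM, ← Matrix.toLin'_apply, Matrix.toLin'_toMatrix']
  have hMentry : ∀ i j, M i j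
      = (if i = j then 1 else 0) + ∑ k, (if σ k = j then 1 else 0) * wv k i := by
    intro i j
    rw [hM, LinearMap.toMatrix'_apply, hfapp, Pi.add_apply, Finset.sum_apply]
    simp only [Pi.smul_apply, smul_eq_mul]
    simp only [Pi.single_apply]
  have hNentry : ∀ i j, N i j
      = (if i = j then 1 else 0) + ∑ k, (if σ k = j then 1 else 0) * (-(wv k)) i := by
    intro i j
    rw [hN, LinearMap.toMatrix'_apply, hgapp, Pi.add_apply, Finset.sum_apply]
    simp only [Pi.smul_apply, smul_eq_mul]
    simp only [Pi.single_apply]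
  have hMO : EntriesInO v M := by
    intro i j
    rw [hMentry i j]
    refine le_trans (v.map_add _ _) (max_le ?_ ?_)
    · split <;> simp
    · refine v.map_sum_le fun k _ => ?_
      split
      · rw [one_mul]; exact (hwlt k i).le
      · rw [zero_mul]; simp
  have hNO : EntriesInO v N := by
    intro i j
    rw [hNentry i j]
    refine le_trans (v.map_add _ _) (max_le ?_ ?_)
    · split <;> simp
    · refine v.map_sum_le fun k _ => ?_
      split
      · rw [one_mul, Pi.neg_apply, v.map_neg]; exact (hwlt k i).le
      · rw [zero_mul]; simp
  have hMres : resM v M = 1 := by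
    funext i j
    show res' v (M i j) = (1 : Matrix (Fin n) (Fin n) (Kbar v)) i j
    rw [hMentry i j, Matrix.one_apply]
    have hs : v (∑ k, (if σ k = j then 1 else 0) * wv k i) < 1 := by
      refine v.map_sum_lt one_ne_zero fun k _ => ?_
      split
      · rw [one_mul]; exact hwlt k i
      · rw [zero_mul, map_zero]; exact zero_lt_iff.mpr one_ne_zero
    rw [res'_add v (by split <;> simp) hs.le, res'_eq_zero_of_lt v hs, add_zero]
    split
    · exact res'_one v
    · exact res'_zero v
  have hfU : ∀ x ∈ U, f x = ∑ k, x (σ k) • ub' k := by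
    intro x hx
    have h1 : (∑ k, x (σ k) • wv k)
        = (∑ k, x (σ k) • ub' k) - (∑ k, x (σ k) • ub k) := by
      rw [← Finset.sum_sub_distrib]
      refine Finset.sum_congr rfl fun k _ => ?_
      rw [hwv]
      exact smul_sub _ _ _
    rw [hfapp, h1, ← hdec x hx]
    abel
  have hgU' : ∀ y ∈ U', g y = ∑ k, y (σ k) • ub k := by
    intro y hy
    have h1 : (∑ k, y (σ k) • (-(wv k)))
        = (∑ k, y (σ k) • ub k) - (∑ k, y (σ k) • ub' k) := by
      rw [← Finset.sum_sub_distrib]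
      refine Finset.sum_congr rfl fun k _ => ?_
      rw [hwv]
      show y (σ k) • -(ub' k - ub k) = _
      rw [neg_sub]
      exact smul_sub _ _ _
    rw [hgapp, h1, ← hdec' y hy]
    abel
  have hML : M.mulVecLin = f := LinearMap.ext fun x => by
    rw [Matrix.mulVecLin_apply, hmulVec]
  have hmap : U.map M.mulVecLin = U' := by
    rw [hML]
    apply le_antisymm
    · rintro y hy
      obtain ⟨x, hx, rfl⟩ := hy
      rw [show f x = ∑ k, x (σ k) • ub' k from hfU x hx]
      exact Submodule.sum_mem _ fun k _ => U'.smul_mem _ (hub'U k)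
    · intro y hy
      refine ⟨g y, ?_, hfg y⟩
      rw [show g y = ∑ k, y (σ k) • ub k from hgU' y hy]
      exact Submodule.sum_mem _ fun k _ => U.smul_mem _ (hubU k)
  refine ⟨M, ⟨hMO, N, hMN, hNM, hNO⟩, hMres, hmap, ?_⟩
  intro u
  rw [hmulVec]
  have h1 : f (u : Fin n → K) ∈ U' := by
    rw [show f (u : Fin n → K) = _ from hfU _ u.2]
    exact Submodule.sum_mem _ fun k _ => U'.smul_mem _ (hub'U k)
  refine proj_eq_on v hσ hU' h1 (M₀ u).2 ?_
  have h2 : proj σ (f (u : Fin n → K)) = proj σ (u : Fin n → K) := by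
    funext l
    exact hfproj _ l
  rw [h2, hM₀ u]

end
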